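/- Let X ⊆ {1,...,m} and Y ⊆ {1,...,n} be arbitrary. If every s-t cut capacity c(X,Y) (as given by the formula ∑_{j∉Y} h_j + ∑_{i∉X} r_i + ∑_{i∈X}∑_{j∈Y} 1(n_{a_i} < j ≤ n_{d_i})) is at least ∑_{i=1}^{m} r_i, then for all index vectors (k_1,...,k_ν), W_{k_1...k_ν}(h,r,a,d) ≥ 0; conversely, nonnegativity of the tensor for all index vectors implies all cut capacities are at least ∑_i r_i, provided h satisfies within-block monotonicity. -/

import Mathlib

open Finset

lemma myImageValFilter {n : ℕ} (x y : ℕ) (hy : y ≤ n) :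
    ((univ : Finset (Fin n)).filter (fun j => x ≤ j.val ∧ j.val < y)).image Fin.val
      = Finset.Ico x y := by
  ext mm
  simp only [Finset.mem_image, Finset.mem_filter, Finset.mem_univ, true_and, Finset.mem_Ico]
  constructor
  · rintro ⟨j, hj, rfl⟩; exact hj
  · rintro ⟨h1, h2⟩; exact ⟨⟨mm, lt_of_lt_of_le h2 hy⟩, ⟨h1, h2⟩, rfl⟩

lemma myCardFilter {n : ℕ} (x y : ℕ) (hy : y ≤ n) :
    ((univ : Finset (Fin n)).filter (fun j => x ≤ j.val ∧ j.val < y)).card = y - x := by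
  rw [← Finset.card_image_of_injective _ Fin.val_injective, myImageValFilter x y hy,
    Nat.card_Ico]

lemma mySumVal {n : ℕ} (h : Fin n → ℕ) (A : Finset (Fin n)) :
    ∑ j ∈ A, h j = ∑ x ∈ A.image Fin.val, (if hx : x < n then h ⟨x, hx⟩ else 0) := by
  rw [Finset.sum_image (fun a _ b _ hab => Fin.val_injective hab)]
  exact Finset.sum_congr rfl fun j _ => by simp [j.isLt]

lemma myTailMin (f : ℕ → ℕ) (l : ℕ) :
    ∀ (c u : ℕ), (∀ i j, l ≤ i → i ≤ j → j < u → f j ≤ f i) →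
    ∀ S : Finset ℕ, S.card = c → S ⊆ Finset.Ico l u →
    ∑ j ∈ Finset.Ico (u - c) u, f j ≤ ∑ j ∈ S, f j := by
  intro c
  induction c with
  | zero => intro u hf S hc hS; simp
  | succ c ih =>
    intro u hf S hc hS
    have hne : S.Nonempty := Finset.card_pos.mp (by omega)
    set M := S.max' hne with hMdef
    have hM : M ∈ S := S.max'_mem hne
    have hMIco := hS hM
    rw [Finset.mem_Ico] at hMIco
    have hS' : S.erase M ⊆ Finset.Ico l M := by
      intro x hx
      have hx1 := hS (Finset.erase_subset _ _ hx)
      rw [Finset.mem_Ico] at hx1 ⊢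
      have h2 := S.le_max' x (Finset.mem_of_mem_erase hx)
      have h3 := Finset.ne_of_mem_erase hx
      omega
    have hcard' : (S.erase M).card = c := by
      rw [Finset.card_erase_of_mem hM]; omega
    have hfM : ∀ i j, l ≤ i → i ≤ j → j < M → f j ≤ f i := fun i j h1 h2 h3 =>
      hf i j h1 h2 (by omega)
    have IH := ih M hfM (S.erase M) hcard' hS'
    have hsplit : ∑ j ∈ S, f j = f M + ∑ j ∈ S.erase M, f j :=
      (Finset.add_sum_erase S f hM).symm
    have hcM : c ≤ M - l := by
      have := Finset.card_le_card hS'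
      rw [hcard', Nat.card_Ico] at this; omega
    have hcu : c + 1 ≤ u - l := by
      have := Finset.card_le_card hS
      rw [hc, Nat.card_Ico] at this; omega
    rw [Finset.sum_Ico_eq_sum_range] at IH ⊢
    have e1 : u - (u - (c + 1)) = c + 1 := by omega
    have e2 : M - (M - c) = c := by omega
    rw [e1, Finset.sum_range_succ]
    rw [e2] at IH
    have hterm : ∑ i ∈ Finset.range c, f (u - (c+1) + i)
        ≤ ∑ i ∈ Finset.range c, f (M - c + i) := by
      apply Finset.sum_le_sum
      intro i hi
      rw [Finset.mem_range] at hi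
      exact hf _ _ (by omega) (by omega) (by omega)
    have hlast : f (u - (c+1) + c) ≤ f M := hf M _ (by omega) (by omega) (by omega)
    omega

section
variable {n ν : ℕ} {nb : Fin (ν + 1) → ℕ}

lemma myExistsBlk (hnb0 : nb 0 = 0) (hnbn : nb (Fin.last ν) = n) (hmono : StrictMono nb)
    (j : Fin n) : ∃ κ : Fin ν, nb κ.castSucc ≤ j.val ∧ j.val < nb κ.succ := by
  classical
  have h0 : (0 : Fin (ν + 1)) ∈ (univ : Finset (Fin (ν+1))).filter (fun c => nb c ≤ j.val) := by
    simp [hnb0]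
  set C := (univ : Finset (Fin (ν+1))).filter (fun c => nb c ≤ j.val) with hC
  have hne : C.Nonempty := ⟨0, h0⟩
  set κ' := C.max' hne with hκ'
  have hκ'mem : κ' ∈ C := C.max'_mem hne
  have hκ'le : nb κ' ≤ j.val := (Finset.mem_filter.mp hκ'mem).2
  have hjn : j.val < n := j.isLt
  have hκ'lt : κ'.val < ν := by
    by_contra hcon
    have : κ' = Fin.last ν := by
      apply Fin.ext; simpa using Nat.le_antisymm (Nat.lt_succ_iff.mp κ'.isLt) (Nat.not_lt.mp hcon)
    rw [this, hnbn] at hκ'le; omega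
  refine ⟨⟨κ'.val, hκ'lt⟩, ?_, ?_⟩
  · have : (⟨κ'.val, hκ'lt⟩ : Fin ν).castSucc = κ' := by apply Fin.ext; simp
    rw [this]; exact hκ'le
  · by_contra hcon
    push_neg at hcon
    have hmem : nb (⟨κ'.val, hκ'lt⟩ : Fin ν).succ ≤ j.val := hcon
    have hmem' : (⟨κ'.val, hκ'lt⟩ : Fin ν).succ ∈ C := by
      simp only [hC, Finset.mem_filter, Finset.mem_univ, true_and]; exact hmem
    have hle := C.le_max' _ hmem'
    rw [← hκ'] at hle
    have : ((⟨κ'.val, hκ'lt⟩ : Fin ν).succ).val ≤ κ'.val := hle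
    simp at this

lemma myBlkUnique (hmono : StrictMono nb) {j : Fin n} {κ κ' : Fin ν}
    (h1 : nb κ.castSucc ≤ j.val ∧ j.val < nb κ.succ)
    (h2 : nb κ'.castSucc ≤ j.val ∧ j.val < nb κ'.succ) : κ = κ' := by
  by_contra hne
  rcases lt_or_gt_of_ne (fun h : κ.val = κ'.val => hne (Fin.ext h)) with hlt | hlt
  · have : nb κ.succ ≤ nb κ'.castSucc := hmono.monotone (by
      show (κ.succ : Fin (ν+1)).val ≤ (κ'.castSucc : Fin (ν+1)).val
      simp; omega)
    omega
  · have : nb κ'.succ ≤ nb κ.castSucc := hmono.monotone (by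
      show (κ'.succ : Fin (ν+1)).val ≤ (κ.castSucc : Fin (ν+1)).val
      simp; omega)
    omega

lemma mySumFiber (hnb0 : nb 0 = 0) (hnbn : nb (Fin.last ν) = n) (hmono : StrictMono nb)
    (s : Finset (Fin n)) (g : Fin n → ℕ) :
    ∑ j ∈ s, g j = ∑ κ : Fin ν,
      ∑ j ∈ s.filter (fun j => nb κ.castSucc ≤ j.val ∧ j.val < nb κ.succ), g j := by
  classical
  choose blk hblk using myExistsBlk hnb0 hnbn hmono
  rw [← Finset.sum_fiberwise s blk g]
  apply Finset.sum_congr rfl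
  intro κ _
  congr 1
  ext j
  simp only [Finset.mem_filter]
  constructor
  · rintro ⟨hs, rfl⟩; exact ⟨hs, hblk j⟩
  · rintro ⟨hs, hj⟩; exact ⟨hs, myBlkUnique hmono (hblk j) hj⟩

lemma mySumInd {s : Finset (Fin n)} {P : Fin n → Prop} [DecidablePred P] {c : Prop} [Decidable c]
    (hpc : ∀ j ∈ s, (P j ↔ c)) :
    ∑ j ∈ s, (if P j then (1:ℕ) else 0) = if c then s.card else 0 := by
  by_cases hc : c
  · simp only [hc, if_true]
    rw [Finset.sum_congr rfl
      (fun j hj => by simp [(hpc j hj).mpr hc] : ∀ j ∈ s, (if P j then (1:ℕ) else 0) = 1)]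
    simp
  · simp only [hc, if_false]
    apply Finset.sum_eq_zero
    intro j hj
    rw [if_neg (fun hp => hc ((hpc j hj).mp hp))]

lemma myIndBlock (hmono : StrictMono nb) (ai di : Fin (ν+1)) (κ : Fin ν) (j : Fin n)
    (hj : nb κ.castSucc ≤ j.val ∧ j.val < nb κ.succ) :
    ((nb ai < j.val + 1 ∧ j.val + 1 ≤ nb di) ↔ (ai.val ≤ κ.val ∧ κ.val < di.val)) := by
  have hmon := hmono.monotone
  constructor
  · rintro ⟨h1, h2⟩
    constructor
    · by_contra hcon
      push_neg at hcon
      have : nb κ.succ ≤ nb ai := hmon (by rw [Fin.le_def]; simp; omega)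
      omega
    · by_contra hcon
      push_neg at hcon
      have : nb di ≤ nb κ.castSucc := hmon (by rw [Fin.le_def]; simp; omega)
      omega
  · rintro ⟨h1, h2⟩
    have ha : nb ai ≤ nb κ.castSucc := hmon (by rw [Fin.le_def]; simp; omega)
    have hd : nb κ.succ ≤ nb di := hmon (by rw [Fin.le_def]; simp; omega)
    omega

lemma myInner (hnb0 : nb 0 = 0) (hnbn : nb (Fin.last ν) = n) (hmono : StrictMono nb)
    (ai di : Fin (ν+1)) (Y : Finset (Fin n)) :
    ∑ j ∈ Y, (if nb ai < j.val + 1 ∧ j.val + 1 ≤ nb di then (1:ℕ) else 0)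
      = ∑ κ ∈ univ.filter (fun κ : Fin ν => ai.val ≤ κ.val ∧ κ.val < di.val),
          (Y.filter (fun j => nb κ.castSucc ≤ j.val ∧ j.val < nb κ.succ)).card := by
  classical
  rw [mySumFiber hnb0 hnbn hmono Y, Finset.sum_filter]
  apply Finset.sum_congr rfl
  intro κ _
  exact mySumInd (fun j hj => myIndBlock hmono ai di κ j (Finset.mem_filter.mp hj).2)

end

/-- Equivalence between the exponential family of cut inequalities
`c(X,Y) ≥ ∑_i r_i` and the polynomial family of structure-tensor inequalities
`W_{k_1…k_ν}(h,r,a,d) ≥ 0`.  The forward implication holds unconditionally;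
the converse holds provided `h` is within-block monotone. -/
theorem stmt11 (m n ν : ℕ) (nb : Fin (ν + 1) → ℕ)
    (hnb0 : nb 0 = 0) (hnbn : nb (Fin.last ν) = n) (hnbmono : StrictMono nb)
    (h : Fin n → ℕ) (r : Fin m → ℕ) (a d : Fin m → Fin (ν + 1))
    (had : ∀ i, a i < d i) (hr : ∀ i, 0 < r i ∧ r i ≤ nb (d i) - nb (a i)) :
    (((∀ (X : Finset (Fin m)) (Y : Finset (Fin n)),
        ∑ i, r i ≤ ∑ j ∈ Yᶜ, h j + ∑ i ∈ Xᶜ, r i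
          + ∑ i ∈ X, ∑ j ∈ Y,
              (if nb (a i) < j.val + 1 ∧ j.val + 1 ≤ nb (d i) then 1 else 0)) →
      (∀ k : Fin ν → ℕ, (∀ κ, k κ ≤ nb κ.succ - nb κ.castSucc) →
        ∑ i, (r i - ∑ κ ∈ Finset.univ.filter
            (fun κ : Fin ν => (a i).val ≤ κ.val ∧ κ.val < (d i).val), k κ)
          ≤ ∑ κ : Fin ν, ∑ j ∈ Finset.univ.filter
              (fun j : Fin n => nb κ.castSucc + k κ ≤ j.val ∧ j.val < nb κ.succ), h j))) ∧
    ((∀ κ : Fin ν, ∀ i j : Fin n,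
        nb κ.castSucc ≤ i.val → i ≤ j → j.val < nb κ.succ → h j ≤ h i) →
      (∀ k : Fin ν → ℕ, (∀ κ, k κ ≤ nb κ.succ - nb κ.castSucc) →
        ∑ i, (r i - ∑ κ ∈ Finset.univ.filter
            (fun κ : Fin ν => (a i).val ≤ κ.val ∧ κ.val < (d i).val), k κ)
          ≤ ∑ κ : Fin ν, ∑ j ∈ Finset.univ.filter
              (fun j : Fin n => nb κ.castSucc + k κ ≤ j.val ∧ j.val < nb κ.succ), h j) →
      (∀ (X : Finset (Fin m)) (Y : Finset (Fin n)),
        ∑ i, r i ≤ ∑ j ∈ Yᶜ, h j + ∑ i ∈ Xᶜ, r i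
          + ∑ i ∈ X, ∑ j ∈ Y,
              (if nb (a i) < j.val + 1 ∧ j.val + 1 ≤ nb (d i) then 1 else 0))) := by
  classical
  have hmon := hnbmono.monotone
  have hblocksub : ∀ κ : Fin ν, nb κ.castSucc ≤ nb κ.succ :=
    fun κ => hmon (Fin.castSucc_lt_succ : κ.castSucc < κ.succ).le
  have hblockn : ∀ κ : Fin ν, nb κ.succ ≤ n := fun κ => hnbn ▸ hmon (Fin.le_last _)
  constructor
  · -- forward direction
    intro hcut k hk
    choose blk hblk using myExistsBlk hnb0 hnbn hnbmono
    set T : Fin m → ℕ := fun i => ∑ κ ∈ univ.filter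
      (fun κ : Fin ν => (a i).val ≤ κ.val ∧ κ.val < (d i).val), k κ with hT
    set X : Finset (Fin m) := univ.filter (fun i => T i < r i) with hX
    set Y : Finset (Fin n) :=
      univ.filter (fun j : Fin n => j.val < nb (blk j).castSucc + k (blk j)) with hY
    have hYf : ∀ κ : Fin ν, Y.filter (fun j => nb κ.castSucc ≤ j.val ∧ j.val < nb κ.succ)
        = univ.filter (fun j : Fin n => nb κ.castSucc ≤ j.val ∧ j.val < nb κ.castSucc + k κ) := by
      intro κ
      ext j
      simp only [hY, Finset.mem_filter, Finset.mem_univ, true_and]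
      constructor
      · rintro ⟨hy, hint⟩
        have hbe : blk j = κ := myBlkUnique hnbmono (hblk j) hint
        rw [hbe] at hy
        exact ⟨hint.1, hy⟩
      · rintro ⟨h1, h2⟩
        have hks := hk κ
        have hbs := hblocksub κ
        have hint : nb κ.castSucc ≤ j.val ∧ j.val < nb κ.succ := ⟨h1, by omega⟩
        have hbe : blk j = κ := myBlkUnique hnbmono (hblk j) hint
        exact ⟨by rw [hbe]; exact h2, hint⟩
    have hYcard : ∀ κ : Fin ν,
        (Y.filter (fun j => nb κ.castSucc ≤ j.val ∧ j.val < nb κ.succ)).card = k κ := by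
      intro κ
      have hks := hk κ
      have hbs := hblocksub κ
      have hbn := hblockn κ
      rw [hYf κ, myCardFilter _ _ (by omega)]
      omega
    have hYc : ∑ j ∈ Yᶜ, h j = ∑ κ : Fin ν, ∑ j ∈ Finset.univ.filter
        (fun j : Fin n => nb κ.castSucc + k κ ≤ j.val ∧ j.val < nb κ.succ), h j := by
      rw [mySumFiber hnb0 hnbn hnbmono Yᶜ h]
      apply Finset.sum_congr rfl
      intro κ _
      congr 1
      ext j
      simp only [hY, Finset.mem_filter, Finset.mem_compl, Finset.mem_univ, true_and, not_lt]
      constructor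
      · rintro ⟨hge, hint⟩
        have hbe : blk j = κ := myBlkUnique hnbmono (hblk j) hint
        rw [hbe] at hge
        exact ⟨hge, hint.2⟩
      · rintro ⟨hge, hlt⟩
        have hint : nb κ.castSucc ≤ j.val ∧ j.val < nb κ.succ :=
          ⟨le_trans (Nat.le_add_right _ _) hge, hlt⟩
        have hbe : blk j = κ := myBlkUnique hnbmono (hblk j) hint
        rw [hbe]
        exact ⟨hge, hint⟩
    have hInner : ∀ i, ∑ j ∈ Y,
        (if nb (a i) < j.val + 1 ∧ j.val + 1 ≤ nb (d i) then (1:ℕ) else 0) = T i := by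
      intro i
      rw [myInner hnb0 hnbn hnbmono (a i) (d i) Y]
      exact Finset.sum_congr rfl (fun κ _ => hYcard κ)
    have hcut' := hcut X Y
    rw [hYc, Finset.sum_congr rfl (fun i (_ : i ∈ X) => hInner i)] at hcut'
    have hsplit : ∑ i, r i = ∑ i ∈ X, r i + ∑ i ∈ Xᶜ, r i := (Finset.sum_add_sum_compl X r).symm
    have hzero : ∑ i ∈ Xᶜ, (r i - T i) = 0 := by
      apply Finset.sum_eq_zero
      intro i hi
      simp only [hX, Finset.mem_compl, Finset.mem_filter, Finset.mem_univ, true_and,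
        not_lt] at hi
      omega
    have hgl : ∑ i, (r i - T i) = ∑ i ∈ X, (r i - T i) := by
      rw [← Finset.sum_add_sum_compl X (fun i => r i - T i), hzero, Nat.add_zero]
    have hXsum : ∑ i ∈ X, (r i - T i) + ∑ i ∈ X, T i = ∑ i ∈ X, r i := by
      rw [← Finset.sum_add_distrib]
      apply Finset.sum_congr rfl
      intro i hi
      simp only [hX, Finset.mem_filter, Finset.mem_univ, true_and] at hi
      omega
    show ∑ i, (r i - T i) ≤ _
    have hee : X.sum T = ∑ i ∈ X, T i := rfl
    omega
  · -- converse direction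
    intro hhmono htensor X Y
    set t : Fin ν → ℕ := fun κ =>
      (Y.filter (fun j => nb κ.castSucc ≤ j.val ∧ j.val < nb κ.succ)).card with ht
    have htb : ∀ κ, t κ ≤ nb κ.succ - nb κ.castSucc := by
      intro κ
      have h1 : (Y.filter (fun j => nb κ.castSucc ≤ j.val ∧ j.val < nb κ.succ)).card
          ≤ ((univ : Finset (Fin n)).filter
            (fun j => nb κ.castSucc ≤ j.val ∧ j.val < nb κ.succ)).card :=
        Finset.card_le_card (Finset.filter_subset_filter _ (Finset.subset_univ Y))
      rw [myCardFilter _ _ (hblockn κ)] at h1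
      exact h1
    have htens := htensor t htb
    set T : Fin m → ℕ := fun i => ∑ κ ∈ univ.filter
      (fun κ : Fin ν => (a i).val ≤ κ.val ∧ κ.val < (d i).val), t κ with hT
    have hInner : ∀ i, ∑ j ∈ Y,
        (if nb (a i) < j.val + 1 ∧ j.val + 1 ≤ nb (d i) then (1:ℕ) else 0) = T i :=
      fun i => myInner hnb0 hnbn hnbmono (a i) (d i) Y
    have htail : ∀ κ : Fin ν, ∑ j ∈ Finset.univ.filter
          (fun j : Fin n => nb κ.castSucc + t κ ≤ j.val ∧ j.val < nb κ.succ), h j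
        ≤ ∑ j ∈ Yᶜ.filter (fun j => nb κ.castSucc ≤ j.val ∧ j.val < nb κ.succ), h j := by
      intro κ
      have hu : nb κ.succ ≤ n := hblockn κ
      have hlu : nb κ.castSucc ≤ nb κ.succ := hblocksub κ
      have htbκ := htb κ
      set f : ℕ → ℕ := fun x => if hx : x < n then h ⟨x, hx⟩ else 0 with hf
      set S := (Yᶜ.filter (fun j => nb κ.castSucc ≤ j.val ∧ j.val < nb κ.succ)).image Fin.val
        with hS
      have hSsub : S ⊆ Finset.Ico (nb κ.castSucc) (nb κ.succ) := by
        intro x hx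
        simp only [hS, Finset.mem_image, Finset.mem_filter] at hx
        obtain ⟨j, ⟨_, hj⟩, rfl⟩ := hx
        rw [Finset.mem_Ico]; exact hj
      have httt : t κ = (Y.filter (fun j => nb κ.castSucc ≤ j.val ∧ j.val < nb κ.succ)).card :=
        rfl
      have hcards : (Y.filter (fun j => nb κ.castSucc ≤ j.val ∧ j.val < nb κ.succ)).card
          + (Yᶜ.filter (fun j => nb κ.castSucc ≤ j.val ∧ j.val < nb κ.succ)).card
          = nb κ.succ - nb κ.castSucc := by
        rw [← Finset.card_union_of_disjoint
            (Finset.disjoint_filter_filter disjoint_compl_right),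
          ← Finset.filter_union, Finset.union_compl, myCardFilter _ _ hu]
      have hScard : S.card = (nb κ.succ - nb κ.castSucc) - t κ := by
        rw [hS, Finset.card_image_of_injective _ Fin.val_injective]
        omega
      have hfmono : ∀ i j, nb κ.castSucc ≤ i → i ≤ j → j < nb κ.succ → f j ≤ f i := by
        intro i j h1 h2 h3
        have hjn : j < n := lt_of_lt_of_le h3 hu
        have hin : i < n := lt_of_le_of_lt h2 hjn
        simp only [hf, dif_pos hjn, dif_pos hin]
        exact hhmono κ ⟨i, hin⟩ ⟨j, hjn⟩ h1 (Fin.mk_le_mk.mpr h2) h3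
      have hkey := myTailMin f (nb κ.castSucc) S.card (nb κ.succ) hfmono S rfl hSsub
      have he : nb κ.succ - S.card = nb κ.castSucc + t κ := by omega
      rw [he] at hkey
      calc ∑ j ∈ Finset.univ.filter
            (fun j : Fin n => nb κ.castSucc + t κ ≤ j.val ∧ j.val < nb κ.succ), h j
          = ∑ x ∈ Finset.Ico (nb κ.castSucc + t κ) (nb κ.succ), f x := by
            rw [mySumVal h, myImageValFilter _ _ hu]
        _ ≤ ∑ x ∈ S, f x := hkey
        _ = ∑ j ∈ Yᶜ.filter (fun j => nb κ.castSucc ≤ j.val ∧ j.val < nb κ.succ), h j :=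
            (mySumVal h _).symm
    have hYcsum : ∑ κ : Fin ν, ∑ j ∈ Finset.univ.filter
          (fun j : Fin n => nb κ.castSucc + t κ ≤ j.val ∧ j.val < nb κ.succ), h j
        ≤ ∑ j ∈ Yᶜ, h j := by
      rw [mySumFiber hnb0 hnbn hnbmono Yᶜ h]
      exact Finset.sum_le_sum (fun κ _ => htail κ)
    have htens' : ∑ i, (r i - T i) ≤ ∑ κ : Fin ν, ∑ j ∈ Finset.univ.filter
        (fun j : Fin n => nb κ.castSucc + t κ ≤ j.val ∧ j.val < nb κ.succ), h j := htens
    have h2 : ∑ i ∈ X, r i ≤ ∑ i ∈ X, (r i - T i) + ∑ i ∈ X, T i := by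
      rw [← Finset.sum_add_distrib]
      exact Finset.sum_le_sum (fun i _ => by omega)
    have h3 : ∑ i ∈ X, (r i - T i) ≤ ∑ i, (r i - T i) :=
      Finset.sum_le_sum_of_subset (Finset.subset_univ X)
    have hsplit : ∑ i, r i = ∑ i ∈ X, r i + ∑ i ∈ Xᶜ, r i := (Finset.sum_add_sum_compl X r).symm
    rw [Finset.sum_congr rfl (fun i (_ : i ∈ X) => hInner i)]
    have hee : X.sum T = ∑ i ∈ X, T i := rfl
    omega
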